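/- Let E be a finite-dimensional real inner product space and ε > 0. For all x, y ∈ E with ‖x‖ ≥ ε and ‖y‖ ≥ ε, and every real a ≥ 0, one has a/‖y‖ ≤ a/‖x‖ − ⟨ a x/‖x‖³, y − x ⟩ + (a/ε³)·‖y − x‖². That is, the descent-lemma inequality f(y) ≤ f(x) + ⟨∇f(x), y − x⟩ + (L/2)‖y − x‖² holds for f(x) = a/‖x‖ with L = 2a/ε³ on the set {x : ‖x‖ ≥ ε}. -/

import Mathlib

lemma stmt10_aux (ε a r s t : ℝ) (hε : 0 < ε) (ha : 0 ≤ a)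
    (hr : ε ≤ r) (hs : ε ≤ s) (ht : t ≤ r * s) :
    a / s ≤ a / r - a / r ^ 3 * (t - r ^ 2) + a / ε ^ 3 * (s ^ 2 - 2 * t + r ^ 2) := by
  have hr0 : 0 < r := lt_of_lt_of_le hε hr
  have hs0 : 0 < s := lt_of_lt_of_le hε hs
  have h1 : ε ^ 3 ≤ r ^ 2 * s := by
    calc ε ^ 3 = ε ^ 2 * ε := by ring
    _ ≤ r ^ 2 * s := mul_le_mul (pow_le_pow_left₀ hε.le hr 2) hs hε.le (by positivity)
  have key : a / r - a / r ^ 3 * (t - r ^ 2) + a / ε ^ 3 * (s ^ 2 - 2 * t + r ^ 2) - a / s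
      = a * (s * ε ^ 3 * (2 * r ^ 2 - t) + s * r ^ 3 * (s ^ 2 - 2 * t + r ^ 2) - r ^ 3 * ε ^ 3)
        / (s * r ^ 3 * ε ^ 3) := by
    field_simp
    ring
  have hnum : 0 ≤ a * (s * ε ^ 3 * (2 * r ^ 2 - t) + s * r ^ 3 * (s ^ 2 - 2 * t + r ^ 2) - r ^ 3 * ε ^ 3) := by
    nlinarith [mul_nonneg (mul_nonneg ha (sub_nonneg.2 ht)) (mul_nonneg hs0.le (by positivity : (0:ℝ) ≤ ε ^ 3 + 2 * r ^ 3)),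
      mul_nonneg (mul_nonneg (mul_nonneg ha hr0.le) (sq_nonneg (s - r))) (sub_nonneg.2 h1)]
  have : 0 ≤ a / r - a / r ^ 3 * (t - r ^ 2) + a / ε ^ 3 * (s ^ 2 - 2 * t + r ^ 2) - a / s := by
    rw [key]; positivity
  linarith

/-- Descent-lemma inequality (A.8) for `f(x) = a/‖x‖` with `L = 2a/ε³` on
`{x : ‖x‖ ≥ ε}`. -/
theorem stmt10 {E : Type*} [NormedAddCommGroup E] [InnerProductSpace ℝ E]
    [FiniteDimensional ℝ E] (ε a : ℝ) (hε : 0 < ε) (ha : 0 ≤ a)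
    (x y : E) (hx : ε ≤ ‖x‖) (hy : ε ≤ ‖y‖) :
    a / ‖y‖ ≤ a / ‖x‖ - (inner ℝ ((a / ‖x‖ ^ 3) • x) (y - x) : ℝ)
      + (a / ε ^ 3) * ‖y - x‖ ^ 2 := by
  have hinner : (inner ℝ ((a / ‖x‖ ^ 3) • x) (y - x) : ℝ)
      = a / ‖x‖ ^ 3 * ((inner ℝ x y : ℝ) - ‖x‖ ^ 2) := by
    rw [real_inner_smul_left, inner_sub_right, real_inner_self_eq_norm_sq]
  have hnorm : ‖y - x‖ ^ 2 = ‖y‖ ^ 2 - 2 * (inner ℝ x y : ℝ) + ‖x‖ ^ 2 := by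
    rw [norm_sub_sq_real, real_inner_comm y x]
  rw [hinner, hnorm]
  exact stmt10_aux ε a ‖x‖ ‖y‖ _ hε ha hx hy (real_inner_le_norm x y)
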